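/- arXiv:1908.07469 — 2 statements merged into one kernel-verified Lean document; each statement's English description precedes it below -/
import Mathlib

section
/- Deterministic contraction estimate: for every g ∈ GL_d(ℂ) and every nonzero v ∈ ℂ^d, δ(x_g⁺, g·[v]) ≤ (a_2(g)/a_1(g)) · (‖g‖ ‖v‖)/‖gv‖. -/
open MeasureTheory ProbabilityTheory Filter Real Topology

namespace RMP

noncomputable section

/-- square complex matrices of size d -/
abbrev Mat (d : ℕ) := Matrix (Fin d) (Fin d) ℂ

/-- ℂ^d with its standard Hermitian norm -/
abbrev Euc (d : ℕ) := EuclideanSpace ℂ (Fin d)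

instance (d : ℕ) : MeasurableSpace (Mat d) := borel _

/-- the operator norm of a matrix, induced by the standard Hermitian norm on ℂ^d -/
def opNorm {d : ℕ} (g : Mat d) : ℝ := ‖Matrix.toEuclideanCLM (𝕜 := ℂ) g‖

/-- N(g) = max(‖g‖, ‖g⁻¹‖) -/
def matN {d : ℕ} (g : Mat d) : ℝ := max (opNorm g) (opNorm g⁻¹)

/-- μ has finite k-th moment: ∫ (log N(g))^k dμ(g) < ∞ -/
def FiniteMoment {d : ℕ} (μ : Measure (Mat d)) (k : ℕ) : Prop :=
  ∫⁻ g, ENNReal.ofReal ((Real.log (matN g)) ^ k) ∂μ < ⊤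

/-- the left product L_n = X_{n-1} ⋯ X_0 (the paper's L_n = X_n ⋯ X_1) -/
def Lprod {M Ω : Type*} [Monoid M] (X : ℕ → Ω → M) (n : ℕ) (ω : Ω) : M :=
  (((List.range n).map fun i => X i ω).reverse).prod

/-- the right product R_n = X_0 ⋯ X_{n-1} (the paper's R_n = X_1 ⋯ X_n) -/
def Rprod {M Ω : Type*} [Monoid M] (X : ℕ → Ω → M) (n : ℕ) (ω : Ω) : M :=
  ((List.range n).map fun i => X i ω).prod

/-- the action of a matrix on ℂ^d -/
def act {d : ℕ} (g : Mat d) (v : Euc d) : Euc d := Matrix.toEuclideanLin g v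

/-- the spectral radius ρ(g) of a complex matrix -/
def specRad {d : ℕ} (g : Mat d) : ℝ := (spectralRadius ℂ g).toReal

/-- the Fubini–Study distance between the projective classes of two nonzero vectors:
`δ([v],[w]) = ‖v ∧ w‖ / (‖v‖ ‖w‖)`, where `‖v ∧ w‖² = ‖v‖²‖w‖² - |⟨v,w⟩|²`. -/
def projDist {d : ℕ} (v w : Euc d) : ℝ :=
  Real.sqrt (‖v‖ ^ 2 * ‖w‖ ^ 2 - ‖(inner ℂ v w : ℂ)‖ ^ 2) / (‖v‖ * ‖w‖)

/-- the Fubini–Study distance from a projective point to the projectivization of a set of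
vectors: `δ(x,[W]) = inf_{y ∈ [W]} δ(x,y)` (with the convention that it is `1`, the diameter
of the projective space, when `[W] = ∅`). -/
def projDistSet {d : ℕ} (v : Euc d) (W : Set (Euc d)) : ℝ :=
  sInf (insert 1 (projDist v '' {w | w ∈ W ∧ w ≠ 0}))

/-- the singular values a_1(g) ≥ ... ≥ a_d(g) of g, in decreasing order (indexed from 0):
the square roots of the eigenvalues of gᴴ g, sorted decreasingly -/
def singVal {d : ℕ} (g : Mat d) (k : Fin d) : ℝ :=
  Real.sqrt ((Matrix.isHermitian_conjTranspose_mul_self g).eigenvalues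
    (Tuple.sort (Matrix.isHermitian_conjTranspose_mul_self g).eigenvalues k.rev))

/-- the moduli of the eigenvalues ρ_1(g) ≥ ... ≥ ρ_d(g) of g, in decreasing order
(indexed from 0): the moduli of the roots of the characteristic polynomial, sorted -/
def eigMod {d : ℕ} (g : Mat d) (k : Fin d) : ℝ :=
  (((g.charpoly.roots.map fun z => ‖z‖).sort (· ≤ ·)).getD (d - 1 - k) 0)

/-- the Furstenberg–Kifer–Hennion subspace L_μ (as a set of vectors), relative to the left
random walk given by `X` and the top Lyapunov exponent `lam1`:
`{0} ∪ {v ≠ 0 | a.s. limsup (1/n) log ‖L_n v‖ < λ₁}` -/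
def FKHspace {d : ℕ} {Ω : Type*} [MeasureSpace Ω] (X : ℕ → Ω → Mat d) (lam1 : ℝ) :
    Set (Euc d) :=
  {v | v = 0 ∨ ∀ᵐ ω, Filter.limsup (fun n => Real.log ‖act (Lprod X n ω) v‖ / n) atTop < lam1}

/-- the analogue of the Furstenberg–Kifer–Hennion subspace for the right random walk
given by `X`: `{0} ∪ {v ≠ 0 | a.s. limsup (1/n) log ‖X_1 ⋯ X_n v‖ < lam1}` -/
def FKHspaceR {d : ℕ} {Ω : Type*} [MeasureSpace Ω] (X : ℕ → Ω → Mat d) (lam1 : ℝ) :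
    Set (Euc d) :=
  {v | v = 0 ∨ ∀ᵐ ω, Filter.limsup (fun n => Real.log ‖act (Rprod X n ω) v‖ / n) atTop < lam1}

/-- the first standard basis vector e_1 of ℂ^d -/
def e1 {d : ℕ} (hd : 1 ≤ d) : Euc d := EuclideanSpace.single ⟨0, hd⟩ 1

/-- the repelling hyperplane associated to the KAK decomposition g = k a(g) l, namely
`H_g^< = [span(l⁻¹ e_2, ..., l⁻¹ e_d)]`, here described by the second factor `l` -/
def repHyp {d : ℕ} (hd : 1 ≤ d) (l : Mat d) : Set (Euc d) :=
  (Submodule.span ℂ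
    ((fun j : Fin d => act l⁻¹ (EuclideanSpace.single j 1)) '' {j | j ≠ ⟨0, hd⟩}) :
    Submodule ℂ (Euc d))

/-- the quotient norm on ℂ^d / L : ‖v + L‖ = inf {‖v + w‖ : w ∈ L} -/
def quotNorm {d : ℕ} (L : Set (Euc d)) (v : Euc d) : ℝ :=
  sInf ((fun w => ‖v + w‖) '' L)

end

end RMP
namespace RMP

section DetContrHelpers

variable {d : ℕ}

lemma act_eq_clm (A : Mat d) (v : Euc d) : act A v = Matrix.toEuclideanCLM (𝕜 := ℂ) A v := by
  rw [act, ← Matrix.coe_toEuclideanCLM_eq_toEuclideanLin]; rfl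

lemma act_mul (A B : Mat d) (v : Euc d) : act (A * B) v = act A (act B v) := by
  rw [act_eq_clm, act_eq_clm, act_eq_clm, map_mul]; rfl

lemma act_one (v : Euc d) : act 1 v = v := by
  rw [act_eq_clm, map_one]; rfl

lemma act_diagonal (c : Fin d → ℂ) (v : Euc d) (i : Fin d) :
    act (Matrix.diagonal c) v i = c i * v i := by
  simp [act, Matrix.toEuclideanLin_apply, Matrix.mulVec_diagonal]

lemma norm_sq_euc (x : Euc d) : ‖x‖ ^ 2 = ∑ i, ‖x i‖ ^ 2 := by
  rw [EuclideanSpace.norm_eq, Real.sq_sqrt]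
  positivity

lemma inner_act_act {k : Mat d} (hk : k ∈ Matrix.unitaryGroup (Fin d) ℂ) (x y : Euc d) :
    (inner ℂ (act k x) (act k y) : ℂ) = inner ℂ x y := by
  rw [Unitary.mem_iff] at hk
  have h1 : k.conjTranspose * k = 1 := by rw [← Matrix.star_eq_conjTranspose]; exact hk.1
  calc (inner ℂ (act k x) (act k y) : ℂ)
      = inner ℂ x (Matrix.toEuclideanLin k.conjTranspose (act k y)) := by
        rw [Matrix.toEuclideanLin_conjTranspose_eq_adjoint, LinearMap.adjoint_inner_right]; rfl
    _ = inner ℂ x (act (k.conjTranspose * k) y) := by rw [act_mul]; rfl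
    _ = inner ℂ x y := by rw [h1, act_one]

lemma norm_act_unitary {k : Mat d} (hk : k ∈ Matrix.unitaryGroup (Fin d) ℂ) (x : Euc d) :
    ‖act k x‖ = ‖x‖ := by
  have h := congrArg (RCLike.re (K := ℂ)) (inner_act_act hk x x)
  rw [inner_self_eq_norm_sq (𝕜 := ℂ), inner_self_eq_norm_sq (𝕜 := ℂ)] at h
  exact (sq_eq_sq₀ (norm_nonneg _) (norm_nonneg _)).1 h

lemma singVal_nonneg (g : Mat d) (i : Fin d) : 0 ≤ singVal g i := Real.sqrt_nonneg _

lemma singVal_antitone (g : Mat d) : Antitone (singVal g) := by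
  intro i j hij
  exact Real.sqrt_le_sqrt
    (Tuple.monotone_sort ((Matrix.isHermitian_conjTranspose_mul_self g).eigenvalues)
      (Fin.rev_le_rev.2 hij))

end DetContrHelpers

/-- **Deterministic contraction estimate** (Aoun–Sert, inequality (3.1)): for every
g ∈ GL_d(ℂ) and every nonzero v ∈ ℂ^d,
δ(x_g⁺, g·[v]) ≤ (a₂(g)/a₁(g)) · ‖g‖‖v‖/‖gv‖,
for any KAK (singular value) decomposition g = k a(g) l defining x_g⁺ = [k e₁]. -/
theorem deterministic_contraction_estimate
    (d : ℕ) (hd : 2 ≤ d)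
    (g : Mat d) (hg : IsUnit g)
    (k l : Mat d)
    (hk : k ∈ Matrix.unitaryGroup (Fin d) ℂ) (hl : l ∈ Matrix.unitaryGroup (Fin d) ℂ)
    (hKAK : g = k * Matrix.diagonal (fun i => (singVal g i : ℂ)) * l)
    (v : Euc d) (hv : v ≠ 0) :
    projDist (act k (e1 (by omega))) (act g v)
      ≤ (singVal g ⟨1, by omega⟩ / singVal g ⟨0, by omega⟩)
          * (opNorm g * ‖v‖ / ‖act g v‖) := by
  have h1d : 1 ≤ d := by omega
  set i0 : Fin d := ⟨0, by omega⟩ with hi0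
  set i1 : Fin d := ⟨1, by omega⟩ with hi1
  set a : Fin d → ℝ := singVal g with ha
  have hann : ∀ i, 0 ≤ a i := fun i => singVal_nonneg g i
  have hanti : Antitone a := singVal_antitone g
  set D : Mat d := Matrix.diagonal (fun i => (a i : ℂ)) with hD
  set y : Euc d := act l v with hy
  set z : Euc d := act D y with hzdef
  have hz : ∀ i, z i = (a i : ℂ) * y i := fun i => act_diagonal _ _ i
  have hgv : act g v = act k z := by rw [hKAK, act_mul, act_mul]
  have hnormy : ‖y‖ = ‖v‖ := norm_act_unitary hl v
  have hnormw : ‖act g v‖ = ‖z‖ := by rw [hgv, norm_act_unitary hk]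
  -- g v ≠ 0
  have hwne : act g v ≠ 0 := by
    intro h0
    apply hv
    have hdet : IsUnit g.det := (Matrix.isUnit_iff_isUnit_det g).1 hg
    have hvv : act (g⁻¹ * g) v = act g⁻¹ (act g v) := act_mul _ _ _
    rw [Matrix.nonsing_inv_mul g hdet, act_one, h0] at hvv
    simpa [act] using hvv
  have hwpos : 0 < ‖act g v‖ := norm_pos_iff.2 hwne
  -- a i0 > 0
  have ha0pos : 0 < a i0 := by
    rcases (hann i0).lt_or_eq with h | h
    · exact h
    · exfalso
      apply hwne
      have hall : ∀ i, a i = 0 := fun i =>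
        le_antisymm (h ▸ hanti (show i0 ≤ i by simp [Fin.le_def, hi0])) (hann i)
      have hD0 : D = 0 := by
        rw [hD, show (fun i => ((a i : ℂ))) = fun _ => 0 from funext fun i => by
          rw [hall i]; norm_num, Matrix.diagonal_zero]
      have hz0 : z = 0 := by rw [hzdef, hD0]; simp [act]
      rw [hgv, hz0]
      simp [act]
  have hi1le : ∀ i : Fin d, i ≠ i0 → a i ≤ a i1 := by
    intro i hne
    refine hanti ?_
    rw [Fin.le_def]
    have : i.val ≠ 0 := by
      intro hvl; exact hne (Fin.ext (by simp [hi0, hvl]))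
    simp [hi1]; omega
  -- norm of u
  have hnormu : ‖act k (e1 h1d)‖ = 1 := by
    rw [norm_act_unitary hk]
    simp [e1]
  -- norm of z squared
  have hnormz : ‖z‖ ^ 2 = ∑ i, (a i * ‖y i‖) ^ 2 := by
    rw [norm_sq_euc]
    refine Finset.sum_congr rfl fun i _ => ?_
    rw [hz i, norm_mul, Complex.norm_real, Real.norm_eq_abs, abs_of_nonneg (hann i)]
  -- inner product
  have hinner : ‖(inner ℂ (act k (e1 h1d)) (act g v) : ℂ)‖ = a i0 * ‖y i0‖ := by
    rw [hgv, inner_act_act hk]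
    have he : (inner ℂ (e1 h1d) z : ℂ) = z i0 := by
      rw [PiLp.inner_apply]
      simp only [e1, EuclideanSpace.single_apply, RCLike.inner_apply, apply_ite,
        map_one, map_zero, ite_mul, one_mul, zero_mul, mul_one, mul_zero]
      rw [Finset.sum_ite_eq' Finset.univ i0]
      simp [hi0]
    rw [he, hz i0, norm_mul, Complex.norm_real, Real.norm_eq_abs, abs_of_nonneg (hann i0)]
  -- the key sum bound
  set S : ℝ := ∑ i ∈ Finset.univ.erase i0, (a i * ‖y i‖) ^ 2 with hSdef
  have hsplit : ‖z‖ ^ 2 - (a i0 * ‖y i0‖) ^ 2 = S := by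
    rw [hnormz, ← Finset.add_sum_erase _ _ (Finset.mem_univ i0), hSdef]
    ring
  have hSle : S ≤ (a i1 * ‖v‖) ^ 2 := by
    calc S ≤ ∑ i ∈ Finset.univ.erase i0, (a i1) ^ 2 * ‖y i‖ ^ 2 := by
          refine Finset.sum_le_sum fun i hi => ?_
          have hii : a i ≤ a i1 := hi1le i (Finset.ne_of_mem_erase hi)
          rw [mul_pow]
          exact mul_le_mul_of_nonneg_right (pow_le_pow_left₀ (hann i) hii 2) (sq_nonneg _)
      _ ≤ ∑ i, (a i1) ^ 2 * ‖y i‖ ^ 2 := by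
          refine Finset.sum_le_sum_of_subset_of_nonneg (Finset.erase_subset _ _)
            fun i _ _ => by positivity
      _ = (a i1) ^ 2 * ‖y‖ ^ 2 := by rw [norm_sq_euc, Finset.mul_sum]
      _ = (a i1 * ‖v‖) ^ 2 := by rw [hnormy]; ring
  have hSnn : 0 ≤ S := Finset.sum_nonneg fun i _ => sq_nonneg _
  have hsqrtS : Real.sqrt S ≤ a i1 * ‖v‖ := by
    calc Real.sqrt S ≤ Real.sqrt ((a i1 * ‖v‖) ^ 2) := Real.sqrt_le_sqrt hSle
      _ = a i1 * ‖v‖ := Real.sqrt_sq (mul_nonneg (hann i1) (norm_nonneg _))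
  -- operator norm lower bound
  have hOp : a i0 ≤ opNorm g := by
    have hsl : star l ∈ Matrix.unitaryGroup (Fin d) ℂ := Unitary.star_mem hl
    set u0 : Euc d := act (star l) (e1 h1d) with hu0def
    have hu0 : ‖u0‖ = 1 := by rw [hu0def, norm_act_unitary hsl]; simp [e1]
    have hgl : g * star l = k * D := by
      rw [hKAK, mul_assoc (k * D), (Unitary.mem_iff.1 hl).2, mul_one]
    have hgu0 : act g u0 = act k (act D (e1 h1d)) := by
      rw [hu0def, ← act_mul, hgl, act_mul]
    have hDe1sq : ‖act D (e1 h1d)‖ ^ 2 = (a i0) ^ 2 := by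
      rw [norm_sq_euc]
      have hterm : ∀ i : Fin d, ‖act D (e1 h1d) i‖ ^ 2
          = if i = i0 then (a i0) ^ 2 else 0 := by
        intro i
        rw [act_diagonal]
        by_cases hii : i = i0
        · simp [hii, e1, EuclideanSpace.single_apply, hi0, Complex.norm_real,
            abs_of_nonneg (hann i0), sq_abs]
        · simp only [e1, EuclideanSpace.single_apply]
          rw [if_neg (by simpa [hi0] using hii)]
          simp [hii]
      rw [Finset.sum_congr rfl fun i _ => hterm i, Finset.sum_ite_eq' Finset.univ i0]
      simp
    have hDe1 : ‖act D (e1 h1d)‖ = a i0 :=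
      (sq_eq_sq₀ (norm_nonneg _) (hann i0)).1 hDe1sq
    calc a i0 = ‖act g u0‖ := by rw [hgu0, norm_act_unitary hk, hDe1]
      _ = ‖Matrix.toEuclideanCLM (𝕜 := ℂ) g u0‖ := by rw [act_eq_clm]
      _ ≤ ‖Matrix.toEuclideanCLM (𝕜 := ℂ) g‖ * ‖u0‖ := ContinuousLinearMap.le_opNorm _ _
      _ = opNorm g := by rw [hu0, mul_one, opNorm]
  -- put everything together
  show projDist (act k (e1 h1d)) (act g v) ≤ (a i1 / a i0) * (opNorm g * ‖v‖ / ‖act g v‖)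
  have hnum : ‖act k (e1 h1d)‖ ^ 2 * ‖act g v‖ ^ 2
      - ‖(inner ℂ (act k (e1 h1d)) (act g v) : ℂ)‖ ^ 2 = S := by
    rw [hnormu, hinner, one_pow, one_mul, hnormw, hsplit]
  calc projDist (act k (e1 h1d)) (act g v)
      = Real.sqrt S / ‖act g v‖ := by
        rw [projDist, hnum, hnormu, one_mul]
    _ ≤ (a i1 * ‖v‖) / ‖act g v‖ := by
        exact div_le_div_of_nonneg_right hsqrtS hwpos.le
    _ ≤ (a i1 / a i0) * (opNorm g * ‖v‖ / ‖act g v‖) := by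
        have heq : (a i1 / a i0) * (opNorm g * ‖v‖ / ‖act g v‖)
            = (a i1 * ‖v‖ / ‖act g v‖) * (opNorm g / a i0) := by ring
        rw [heq]
        refine le_mul_of_one_le_right (div_nonneg (mul_nonneg (hann i1) (norm_nonneg _)) (norm_nonneg _)) ?_
        rw [le_div_iff₀ ha0pos, one_mul]
        exact hOp



end RMP
end

section
/- Failure of the law of large numbers for the spectral radius for Markovian increments: let a = diag(3, 1, 1/3) ∈ SL_3(ℝ), let σ ∈ SL_3(ℝ) be the permutation matrix with σe_1 = e_2, σe_2 = e_3, σe_3 = e_1, and let ω ∈ SL_3(ℝ) be the permutation matrix with ωe_1 = e_3, ωe_2 = e_1, ωe_3 = e_2. Let (X_n)_{n≥1} be the Markov chain on the state space {a, σ, ω} with transition probabilities P(a,a) = 1/2, P(a,σ) = 1/2, P(σ,ω) = 1, P(ω,a) = 1 (all other transitions having probability 0), with initial distribution the stationary measure m = (1/2)δ_a + (1/4)δ_σ + (1/4)δ_ω, and let L_n = X_n ⋯ X_1. Then almost surely liminf_n (1/n) log ρ(L_n) = 0 and limsup_n (1/n) log ρ(L_n) ≥ (1/3) log 3 > 0;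 in particular (1/n) log ρ(L_n) does not converge almost surely. -/
open MeasureTheory ProbabilityTheory Filter Real Topology

namespace RMP

noncomputable section

instance : MeasurableSpace (Matrix (Fin 3) (Fin 3) ℝ) := borel _

/-- the spectral radius of a real matrix: the maximum of the moduli of its (complex)
eigenvalues, i.e. the spectral radius of its complexification -/
def specRadR (g : Matrix (Fin 3) (Fin 3) ℝ) : ℝ :=
  (spectralRadius ℂ (g.map fun x => (x : ℂ))).toReal

/-- the diagonal matrix a = diag(3, 1, 1/3) -/
def mA : Matrix (Fin 3) (Fin 3) ℝ := !![3, 0, 0; 0, 1, 0; 0, 0, 1/3]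

/-- the cyclic permutation matrix σ, with σe₁ = e₂, σe₂ = e₃, σe₃ = e₁ -/
def mS : Matrix (Fin 3) (Fin 3) ℝ := !![0, 0, 1; 1, 0, 0; 0, 1, 0]

/-- the cyclic permutation matrix ω, with ωe₁ = e₃, ωe₂ = e₁, ωe₃ = e₂ -/
def mW : Matrix (Fin 3) (Fin 3) ℝ := !![0, 1, 0; 0, 0, 1; 1, 0, 0]

/-- the stationary initial distribution m = (1/2)δ_a + (1/4)δ_σ + (1/4)δ_ω -/
def m0 (g : Matrix (Fin 3) (Fin 3) ℝ) : ℝ :=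
  if g = mA then 1/2 else if g = mS then 1/4 else if g = mW then 1/4 else 0

/-- the transition probabilities: P(a,a) = 1/2, P(a,σ) = 1/2, P(σ,ω) = 1, P(ω,a) = 1,
all other transitions having probability 0 -/
def trans (g h : Matrix (Fin 3) (Fin 3) ℝ) : ℝ :=
  if g = mA ∧ h = mA then 1/2 else if g = mA ∧ h = mS then 1/2
    else if g = mS ∧ h = mW then 1 else if g = mW ∧ h = mA then 1 else 0

end



/-! ### Auxiliary matrix computations -/

/-- explicit diagonal 3×3 matrix -/
noncomputable def Dm (x y z : ℝ) : Matrix (Fin 3) (Fin 3) ℝ := !![x,0,0; 0,y,0; 0,0,z]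

lemma Dm_eq_diagonal (x y z : ℝ) : Dm x y z = Matrix.diagonal ![x, y, z] := by
  ext i j
  fin_cases i <;> fin_cases j <;>
    simp [Dm, Matrix.diagonal_apply, Matrix.vecHead, Matrix.vecTail]

lemma pow_three' {M : Type*} [Monoid M] (m : M) : m ^ 3 = m * m * m := by
  rw [pow_succ, pow_succ, pow_one]

lemma mA_pow (K : ℕ) : mA ^ K = Dm (3 ^ K) 1 ((3:ℝ)⁻¹ ^ K) := by
  induction K with
  | zero => simp [Dm, Matrix.one_fin_three]
  | succ n ih =>
    rw [pow_succ, ih, mA, Dm, Dm, Matrix.mul_fin_three]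
    norm_num
    constructor <;> ring

lemma mW_mS : mW * mS = 1 := by
  rw [mW, mS, Matrix.mul_fin_three, Matrix.one_fin_three]; norm_num

lemma mS_Dm_mW (x y z : ℝ) : mS * (Dm x y z * mW) = Dm z x y := by
  rw [mS, mW, Dm, Dm, Matrix.mul_fin_three, Matrix.mul_fin_three]; norm_num

lemma mS_Dm_cube (x y z : ℝ) (h : x * y * z = 1) : (mS * Dm x y z) ^ 3 = 1 := by
  rw [pow_three', mS, Dm, Matrix.mul_fin_three, Matrix.mul_fin_three, Matrix.mul_fin_three,
    Matrix.one_fin_three]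
  norm_num
  refine ⟨?_, ?_, ?_⟩ <;> linear_combination h

lemma Dm_mW_cube (x y z : ℝ) (h : x * y * z = 1) : (Dm x y z * mW) ^ 3 = 1 := by
  rw [pow_three', mW, Dm, Matrix.mul_fin_three, Matrix.mul_fin_three, Matrix.mul_fin_three,
    Matrix.one_fin_three]
  norm_num
  refine ⟨?_, ?_, ?_⟩ <;> linear_combination h

/-! ### Spectral radius computations -/

lemma map_eq_mapMatrix (M : Matrix (Fin 3) (Fin 3) ℝ) :
    (M.map fun x => (x : ℂ)) = Complex.ofRealHom.mapMatrix M := rfl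

lemma specRadR_of_cube_one (M : Matrix (Fin 3) (Fin 3) ℝ) (h : M ^ 3 = 1) : specRadR M = 1 := by
  have hc : (M.map fun x => (x : ℂ)) ^ 3 = 1 := by
    rw [map_eq_mapMatrix, ← map_pow, h, map_one]
  set Mc := M.map fun x => (x : ℂ) with hMc
  have hne : (spectrum ℂ Mc).Nonempty :=
    spectrum.nonempty_of_isAlgClosed_of_finiteDimensional ℂ Mc
  have key : ∀ k ∈ spectrum ℂ Mc, (‖k‖₊ : ENNReal) = 1 := by
    intro k hk
    have h3 : k ^ 3 ∈ spectrum ℂ (Mc ^ 3) := spectrum.pow_image_subset Mc 3 ⟨k, hk, rfl⟩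
    rw [hc, spectrum.one_eq] at h3
    have hk3 : k ^ 3 = 1 := h3
    have hnorm : ‖k‖ ^ 3 = 1 := by
      rw [← norm_pow, hk3, norm_one]
    have hn1 : ‖k‖ = 1 := by nlinarith [norm_nonneg k, sq_nonneg (‖k‖ - 1), sq_nonneg (‖k‖ + 1)]
    have h1 : ‖k‖₊ = 1 := by
      apply NNReal.coe_injective
      rw [coe_nnnorm, hn1, NNReal.coe_one]
    rw [h1, ENNReal.coe_one]
  have hsr : spectralRadius ℂ Mc = 1 := by
    apply le_antisymm
    · rw [spectralRadius]
      exact iSup₂_le fun k hk => le_of_eq (key k hk)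
    · obtain ⟨k, hk⟩ := hne
      have h2 := le_iSup₂ (f := fun k (_ : k ∈ spectrum ℂ Mc) => (‖k‖₊ : ENNReal)) k hk
      rw [key k hk] at h2
      rw [spectralRadius]
      exact h2
  rw [specRadR, ← hMc, hsr, ENNReal.toReal_one]

lemma map_Dm (x y z : ℝ) :
    ((Dm x y z).map fun r => (r : ℂ)) = Matrix.diagonal ![(x:ℂ), (y:ℂ), (z:ℂ)] := by
  rw [Dm_eq_diagonal, Matrix.diagonal_map (by simp)]
  exact congrArg Matrix.diagonal (funext fun i => by fin_cases i <;> rfl)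

lemma specRadR_Dm_eq (x y z m : ℝ) (h0 : 0 ≤ m) (hx : |x| ≤ m) (hy : |y| ≤ m)
    (hz : |z| ≤ m) (hmem : ∃ i, ![x, y, z] i = m) : specRadR (Dm x y z) = m := by
  rw [specRadR, map_Dm]
  have hspec : spectrum ℂ (Matrix.diagonal ![(x:ℂ), (y:ℂ), (z:ℂ)]) =
      Set.range ![(x:ℂ), (y:ℂ), (z:ℂ)] := spectrum_diagonal _
  have key : ∀ r : ℝ, (‖(r:ℂ)‖₊ : ENNReal) = ENNReal.ofReal |r| := by
    intro r
    rw [Complex.nnnorm_real, ← enorm_eq_nnnorm, ← ofReal_norm, Real.norm_eq_abs]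
  have hsr : spectralRadius ℂ (Matrix.diagonal ![(x:ℂ), (y:ℂ), (z:ℂ)]) = ENNReal.ofReal m := by
    rw [spectralRadius]
    apply le_antisymm
    · apply iSup₂_le
      intro k hk
      rw [hspec] at hk
      obtain ⟨i, rfl⟩ := hk
      fin_cases i <;> norm_num <;>
        · rw [← enorm_eq_nnnorm, ← ofReal_norm, Real.norm_eq_abs]
          exact ENNReal.ofReal_le_ofReal (by assumption)
    · obtain ⟨i, hi⟩ := hmem
      have hmemc : (m:ℂ) ∈ spectrum ℂ (Matrix.diagonal ![(x:ℂ), (y:ℂ), (z:ℂ)]) := by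
        rw [hspec]
        exact ⟨i, by fin_cases i <;> simp_all⟩
      have h2 := le_iSup₂ (f := fun k (_ : k ∈ spectrum ℂ
        (Matrix.diagonal ![(x:ℂ), (y:ℂ), (z:ℂ)])) => (‖k‖₊ : ENNReal)) (m:ℂ) hmemc
      rwa [key, abs_of_nonneg h0] at h2
  rw [hsr, ENNReal.toReal_ofReal h0]

lemma prod3 (K : ℕ) : (3:ℝ) ^ K * 1 * (3:ℝ)⁻¹ ^ K = 1 := by
  rw [mul_one, ← mul_pow]; norm_num

lemma one_le_pow3 (K : ℕ) : (1:ℝ) ≤ 3 ^ K := one_le_pow₀ (by norm_num)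

lemma inv_pow_le_pow3 (K : ℕ) : ((3:ℝ)⁻¹) ^ K ≤ 3 ^ K :=
  pow_le_pow_left₀ (by norm_num) (by norm_num) K

lemma specRadR_mA_pow (K : ℕ) : specRadR (mA ^ K) = 3 ^ K := by
  rw [mA_pow]
  refine specRadR_Dm_eq _ _ _ _ (by positivity) ?_ ?_ ?_ ⟨0, rfl⟩
  · rw [abs_of_nonneg (by positivity)]
  · rw [abs_one]; exact one_le_pow3 K
  · rw [abs_of_nonneg (by positivity)]; exact inv_pow_le_pow3 K

lemma specRadR_sDw (K : ℕ) : specRadR (mS * (mA ^ K * mW)) = 3 ^ K := by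
  rw [mA_pow, mS_Dm_mW]
  refine specRadR_Dm_eq _ _ _ _ (by positivity) ?_ ?_ ?_ ⟨1, rfl⟩
  · rw [abs_of_nonneg (by positivity)]; exact inv_pow_le_pow3 K
  · rw [abs_of_nonneg (by positivity)]
  · rw [abs_one]; exact one_le_pow3 K

lemma specRadR_sD (K : ℕ) : specRadR (mS * mA ^ K) = 1 := by
  rw [mA_pow]
  exact specRadR_of_cube_one _ (mS_Dm_cube _ _ _ (prod3 K))

lemma specRadR_Dw (K : ℕ) : specRadR (mA ^ K * mW) = 1 := by
  rw [mA_pow]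
  exact specRadR_of_cube_one _ (Dm_mW_cube _ _ _ (prod3 K))

/-! ### Deterministic trajectory analysis -/

lemma mA_ne_mS : mA ≠ mS := fun h => by
  have := congr_fun (congr_fun h 0) 0; norm_num [mA, mS] at this
lemma mA_ne_mW : mA ≠ mW := fun h => by
  have := congr_fun (congr_fun h 0) 0; norm_num [mA, mW] at this
lemma mS_ne_mW : mS ≠ mW := fun h => by
  have := congr_fun (congr_fun h 0) 1; norm_num [mS, mW] at this

lemma trans_cases {g h : Matrix (Fin 3) (Fin 3) ℝ} (hne : trans g h ≠ 0) :
    (g = mA ∧ (h = mA ∨ h = mS)) ∨ (g = mS ∧ h = mW) ∨ (g = mW ∧ h = mA) := by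
  unfold trans at hne
  split_ifs at hne with h1 h2 h3 h4 <;> tauto

section Traj
variable (f : ℕ → Matrix (Fin 3) (Fin 3) ℝ)

noncomputable def Lf (n : ℕ) : Matrix (Fin 3) (Fin 3) ℝ := Lprod (fun i (_ : Unit) => f i) n ()

open Classical in
noncomputable def cnt (n : ℕ) : ℕ := ((Finset.range n).filter (fun i => f i = mA)).card

noncomputable def Wf : Matrix (Fin 3) (Fin 3) ℝ := if f 0 = mW then mW else 1

lemma Lf_zero : Lf f 0 = 1 := by simp [Lf, Lprod]

lemma Lf_succ (n : ℕ) : Lf f (n + 1) = f n * Lf f n := by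
  unfold Lf Lprod
  rw [List.range_succ, List.map_append, List.reverse_append]
  simp

lemma cnt_zero : cnt f 0 = 0 := by simp [cnt]

open Classical in
lemma cnt_succ (n : ℕ) :
    cnt f (n + 1) = if f n = mA then cnt f n + 1 else cnt f n := by
  unfold cnt
  rw [Finset.range_add_one, Finset.filter_insert]
  split_ifs with h
  · rw [Finset.card_insert_of_notMem (by simp)]
  · rfl

lemma cnt_le (n : ℕ) : cnt f n ≤ n := by
  classical
  exact le_trans (Finset.card_filter_le _ _) (by simp)

lemma hW1 (h : f 0 ≠ mW) : Wf f = 1 := by rw [Wf, if_neg h]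
lemma hWw (h : f 0 = mW) : Wf f = mW := by rw [Wf, if_pos h]

variable {f}
variable (hR : ∀ i, trans (f i) (f (i + 1)) ≠ 0)
variable (hst0 : f 0 = mA ∨ f 0 = mS ∨ f 0 = mW)

include hR hst0 in
lemma states_all : ∀ i, f i = mA ∨ f i = mS ∨ f i = mW := by
  intro i
  cases i with
  | zero => exact hst0
  | succ j =>
    rcases trans_cases (hR j) with ⟨_, h | h⟩ | ⟨_, h⟩ | ⟨_, h⟩ <;> tauto

include hR in
lemma next_of_mS {i : ℕ} (h : f i = mS) : f (i + 1) = mW := by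
  rcases trans_cases (hR i) with ⟨h1, _⟩ | ⟨_, h2⟩ | ⟨h1, _⟩
  · exact absurd (h1.symm.trans h) mA_ne_mS
  · exact h2
  · exact absurd (h.symm.trans h1) mS_ne_mW

include hR in
lemma prev_of_mS {i : ℕ} (h : f (i + 1) = mS) : f i = mA := by
  rcases trans_cases (hR i) with ⟨h1, _⟩ | ⟨_, h2⟩ | ⟨_, h2⟩
  · exact h1
  · exact absurd (h2.symm.trans h) (Ne.symm mS_ne_mW)
  · exact absurd (h2.symm.trans h) mA_ne_mS

include hR in
lemma prev_of_mW {i : ℕ} (h : f (i + 1) = mW) : f i = mS := by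
  rcases trans_cases (hR i) with ⟨h1, h2 | h2⟩ | ⟨h2, _⟩ | ⟨_, h2⟩
  · exact absurd (h2.symm.trans h) mA_ne_mW
  · exact absurd (h2.symm.trans h) mS_ne_mW
  · exact h2
  · exact absurd (h2.symm.trans h) mA_ne_mW

include hR hst0 in
/-- structure of the left products -/
lemma Lf_form : ∀ m : ℕ,
    (Lf f (m + 1) = mA ^ (cnt f (m + 1)) * Wf f ∧ f m ≠ mS) ∨
    (Lf f (m + 1) = mS * (mA ^ (cnt f (m + 1)) * Wf f) ∧ f m = mS) := by
  intro m
  induction m with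
  | zero =>
    rcases hst0 with h | h | h
    · left
      have hc : cnt f 1 = 1 := by rw [cnt_succ, cnt_zero, if_pos h]
      refine ⟨?_, fun hh => mA_ne_mS (h.symm.trans hh)⟩
      rw [Lf_succ, Lf_zero, mul_one, hc, pow_one,
        hW1 f (fun hh => mA_ne_mW (h.symm.trans hh)), mul_one, h]
    · right
      have hc : cnt f 1 = 0 := by
        rw [cnt_succ, cnt_zero, if_neg (fun hh => mA_ne_mS (hh.symm.trans h))]
      refine ⟨?_, h⟩
      rw [Lf_succ, Lf_zero, mul_one, hc, pow_zero, one_mul,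
        hW1 f (fun hh => mS_ne_mW (h.symm.trans hh)), mul_one, h]
    · left
      have hc : cnt f 1 = 0 := by
        rw [cnt_succ, cnt_zero, if_neg (fun hh => mA_ne_mW (hh.symm.trans h))]
      refine ⟨?_, fun hh => mS_ne_mW (hh.symm.trans h)⟩
      rw [Lf_succ, Lf_zero, mul_one, hc, pow_zero, one_mul, hWw f h, h]
  | succ n ih =>
    rcases ih with ⟨hL, hm⟩ | ⟨hL, hm⟩
    · have hfn : f (n + 1) = mA ∨ f (n + 1) = mS := by
        rcases trans_cases (hR n) with ⟨_, h2⟩ | ⟨h1, _⟩ | ⟨_, h2⟩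
        · exact h2
        · exact absurd h1 hm
        · left; exact h2
      rcases hfn with h | h
      · left
        refine ⟨?_, fun hh => mA_ne_mS (h.symm.trans hh)⟩
        rw [Lf_succ, cnt_succ, if_pos h, hL, h, ← mul_assoc, ← pow_succ']
      · right
        refine ⟨?_, h⟩
        rw [Lf_succ, cnt_succ, if_neg (fun hh => mA_ne_mS (hh.symm.trans h)), hL, h]
    · have h2 : f (n + 1) = mW := next_of_mS hR hm
      left
      refine ⟨?_, fun hh => mS_ne_mW (hh.symm.trans h2)⟩
      rw [Lf_succ, cnt_succ, if_neg (fun hh => mA_ne_mW (hh.symm.trans h2)), hL, h2,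
        ← mul_assoc, mW_mS, one_mul]

open Classical in
include hR hst0 in
/-- the counting bound: at least a third of the letters are a's -/
lemma cnt_lower (n : ℕ) : n ≤ 3 * cnt f n + 3 := by
  set Fa := (Finset.range n).filter (fun i => f i = mA) with hFa
  set Fs := (Finset.range n).filter (fun i => f i = mS) with hFs
  set Fw := (Finset.range n).filter (fun i => f i = mW) with hFw
  have hs : Fs ⊆ insert 0 (Fa.image (· + 1)) := by
    intro i hi
    rw [hFs, Finset.mem_filter, Finset.mem_range] at hi
    cases i with
    | zero => exact Finset.mem_insert_self _ _
    | succ j =>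
      refine Finset.mem_insert_of_mem (Finset.mem_image.2 ⟨j, ?_, rfl⟩)
      rw [hFa, Finset.mem_filter, Finset.mem_range]
      exact ⟨by omega, prev_of_mS hR hi.2⟩
  have hw : Fw ⊆ insert 0 (insert 1 (Fa.image (· + 2))) := by
    intro i hi
    rw [hFw, Finset.mem_filter, Finset.mem_range] at hi
    match i, hi with
    | 0, _ => exact Finset.mem_insert_self _ _
    | 1, _ => exact Finset.mem_insert_of_mem (Finset.mem_insert_self _ _)
    | (j+2), hi =>
      refine Finset.mem_insert_of_mem (Finset.mem_insert_of_mem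
        (Finset.mem_image.2 ⟨j, ?_, rfl⟩))
      rw [hFa, Finset.mem_filter, Finset.mem_range]
      exact ⟨by omega, prev_of_mS hR (prev_of_mW hR hi.2)⟩
  have hcards : Fs.card ≤ Fa.card + 1 := by
    have c1 := Finset.card_le_card hs
    have c2 := Finset.card_insert_le 0 (Fa.image (· + 1))
    have c3 := Finset.card_image_le (s := Fa) (f := (· + 1))
    omega
  have hcardw : Fw.card ≤ Fa.card + 2 := by
    have c1 := Finset.card_le_card hw
    have c2 := Finset.card_insert_le 0 (insert 1 (Fa.image (· + 2)))
    have c3 := Finset.card_insert_le 1 (Fa.image (· + 2))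
    have c4 := Finset.card_image_le (s := Fa) (f := (· + 2))
    omega
  have hcover : (Finset.range n) ⊆ Fa ∪ Fs ∪ Fw := by
    intro i hi
    rcases states_all hR hst0 i with h | h | h
    · exact Finset.mem_union_left _ (Finset.mem_union_left _ (Finset.mem_filter.2 ⟨hi, h⟩))
    · exact Finset.mem_union_left _ (Finset.mem_union_right _ (Finset.mem_filter.2 ⟨hi, h⟩))
    · exact Finset.mem_union_right _ (Finset.mem_filter.2 ⟨hi, h⟩)
  have hn : n ≤ Fa.card + Fs.card + Fw.card := by
    calc n = (Finset.range n).card := (Finset.card_range n).symm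
    _ ≤ (Fa ∪ Fs ∪ Fw).card := Finset.card_le_card hcover
    _ ≤ (Fa ∪ Fs).card + Fw.card := Finset.card_union_le _ _
    _ ≤ Fa.card + Fs.card + Fw.card := by gcongr; exact Finset.card_union_le _ _
  have : cnt f n = Fa.card := rfl
  omega

include hR in
lemma sigma_inf (hNA : ∀ m, ∃ i, m ≤ i ∧ f i ≠ mA)
    (hstall : ∀ i, f i = mA ∨ f i = mS ∨ f i = mW) :
    ∀ m, ∃ i, m ≤ i ∧ f i = mS := by
  intro m
  obtain ⟨i, hmi, hia⟩ := hNA (m + 1)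
  rcases hstall i with h | h | h
  · exact absurd h hia
  · exact ⟨i, by omega, h⟩
  · match i, hmi, h with
    | (j+1), hmi, h => exact ⟨j, by omega, prev_of_mW hR h⟩

end Traj

/-! ### Probabilistic part -/

/-- the three states -/
noncomputable def st : Fin 3 → Matrix (Fin 3) (Fin 3) ℝ := ![mA, mS, mW]

noncomputable def idx (g : Matrix (Fin 3) (Fin 3) ℝ) : Fin 3 :=
  if g = mA then 0 else if g = mS then 1 else 2

lemma st_idx {g : Matrix (Fin 3) (Fin 3) ℝ} (h : g = mA ∨ g = mS ∨ g = mW) :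
    st (idx g) = g := by
  unfold idx
  split_ifs with h1 h2
  · simp [st, h1]
  · simp [st, h2]
  · rcases h with h | h | h
    · exact absurd h h1
    · exact absurd h h2
    · simp [st, h]

/-- the word associated to a tuple of states -/
noncomputable def wd (n : ℕ) (t : Fin (n + 1) → Fin 3) : ℕ → Matrix (Fin 3) (Fin 3) ℝ :=
  fun i => if h : i < n + 1 then st (t ⟨i, h⟩) else mA

lemma m0_le_one (g : Matrix (Fin 3) (Fin 3) ℝ) : m0 g ≤ 1 := by
  unfold m0; split_ifs <;> norm_num
lemma trans_nonneg (g h : Matrix (Fin 3) (Fin 3) ℝ) : 0 ≤ trans g h := by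
  unfold trans; split_ifs <;> norm_num
lemma trans_le_one (g h : Matrix (Fin 3) (Fin 3) ℝ) : trans g h ≤ 1 := by
  unfold trans; split_ifs <;> norm_num
lemma trans_mA_mA : trans mA mA = 1/2 := by unfold trans; rw [if_pos ⟨rfl, rfl⟩]

section Prob
variable {Ω : Type*} [MeasureSpace Ω] [IsProbabilityMeasure (ℙ : Measure Ω)]
variable (X : ℕ → Ω → Matrix (Fin 3) (Fin 3) ℝ)
variable (hstates : ∀ n ω, X n ω ∈ ({mA, mS, mW} : Set (Matrix (Fin 3) (Fin 3) ℝ)))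
variable (hMarkov : ∀ (n : ℕ) (w : ℕ → Matrix (Fin 3) (Fin 3) ℝ),
      ℙ {ω | ∀ i ≤ n, X i ω = w i} =
        ENNReal.ofReal (m0 (w 0) * ∏ i ∈ Finset.range n, trans (w i) (w (i + 1))))

include hstates in
omit [MeasureSpace Ω] in
lemma states_or (n : ℕ) (ω : Ω) : X n ω = mA ∨ X n ω = mS ∨ X n ω = mW := by
  have := hstates n ω
  simpa [Set.mem_insert_iff] using this

include hstates hMarkov in
lemma badR_null (i : ℕ) : ℙ {ω | trans (X i ω) (X (i + 1) ω) = 0} = 0 := by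
  set B := {ω | trans (X i ω) (X (i + 1) ω) = 0} with hB
  have hsub : B ⊆ ⋃ (t : Fin (i + 2) → Fin 3),
      ({ω | ∀ j ≤ i + 1, X j ω = wd (i + 1) t j} ∩ B) := by
    intro ω hω
    refine Set.mem_iUnion.2 ⟨fun j => idx (X (j : ℕ) ω), ⟨?_, hω⟩⟩
    intro j hj
    have hj' : j < i + 2 := by omega
    simp only [wd, dif_pos hj']
    exact (st_idx (states_or X hstates j ω)).symm
  refine measure_mono_null hsub (measure_iUnion_null fun t => ?_)
  by_cases hbad : trans (wd (i + 1) t i) (wd (i + 1) t (i + 1)) = 0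
  · refine measure_mono_null Set.inter_subset_left ?_
    rw [hMarkov (i + 1) (wd (i + 1) t)]
    rw [Finset.prod_eq_zero (Finset.self_mem_range_succ i) hbad, mul_zero, ENNReal.ofReal_zero]
  · refine measure_mono_null ?_ (measure_empty (μ := (ℙ : Measure Ω)))
    intro ω hω
    obtain ⟨h1, h2⟩ := hω
    have h2' : trans (X i ω) (X (i + 1) ω) = 0 := h2
    rw [h1 i (by omega), h1 (i + 1) (by omega)] at h2'
    exact absurd h2' hbad

include hstates hMarkov in
lemma tailA_null (m : ℕ) : ℙ {ω | ∀ i, m ≤ i → X i ω = mA} = 0 := by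
  set E := {ω | ∀ i, m ≤ i → X i ω = mA} with hE
  have key : ∀ n : ℕ, ℙ E ≤ (3 : ENNReal) ^ (m + 1) * ENNReal.ofReal ((1/2) ^ n) := by
    intro n
    set wds : (Fin (m + 1) → Fin 3) → ℕ → Matrix (Fin 3) (Fin 3) ℝ :=
      fun s j => if h : j < m then st (s ⟨j, by omega⟩) else mA with hwds
    have hsub : E ⊆ ⋃ (s : Fin (m + 1) → Fin 3),
        {ω | ∀ j ≤ m + n, X j ω = wds s j} := by
      intro ω hω
      refine Set.mem_iUnion.2 ⟨fun j => idx (X (j : ℕ) ω), ?_⟩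
      intro j hj
      by_cases hjm : j < m
      · simp only [hwds, dif_pos hjm]
        exact (st_idx (states_or X hstates j ω)).symm
      · simp only [hwds, dif_neg hjm]
        exact hω j (by omega)
    calc ℙ E ≤ ∑' (s : Fin (m + 1) → Fin 3), ℙ {ω | ∀ j ≤ m + n, X j ω = wds s j} :=
          le_trans (measure_mono hsub) (measure_iUnion_le _)
    _ ≤ ∑' (s : Fin (m + 1) → Fin 3), ENNReal.ofReal ((1/2) ^ n) := by
          apply ENNReal.tsum_le_tsum
          intro s
          rw [hMarkov (m + n) (wds s)]
          apply ENNReal.ofReal_le_ofReal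
          have hsplit : ∏ j ∈ Finset.range (m + n), trans (wds s j) (wds s (j + 1)) =
              (∏ j ∈ Finset.range m, trans (wds s j) (wds s (j + 1))) *
              (∏ j ∈ Finset.range n, trans (wds s (m + j)) (wds s (m + j + 1))) :=
            Finset.prod_range_add _ m n
          have htail : ∀ j ∈ Finset.range n,
              trans (wds s (m + j)) (wds s (m + j + 1)) = 1/2 := by
            intro j _
            have h1 : ¬ (m + j < m) := by omega
            have h2 : ¬ (m + j + 1 < m) := by omega
            simp only [hwds, dif_neg h1, dif_neg h2]
            exact trans_mA_mA
          rw [hsplit, Finset.prod_congr rfl htail, Finset.prod_const, Finset.card_range]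
          have hpref : (∏ j ∈ Finset.range m, trans (wds s j) (wds s (j + 1))) ≤ 1 :=
            Finset.prod_le_one (fun _ _ => trans_nonneg _ _) (fun _ _ => trans_le_one _ _)
          have hprefpos : 0 ≤ ∏ j ∈ Finset.range m, trans (wds s j) (wds s (j + 1)) :=
            Finset.prod_nonneg (fun _ _ => trans_nonneg _ _)
          have h2n : (0:ℝ) ≤ (1/2) ^ n := by positivity
          calc m0 (wds s 0) * ((∏ j ∈ Finset.range m, trans (wds s j) (wds s (j + 1))) *
                (1/2 : ℝ) ^ n)
              ≤ 1 * (1 * (1/2) ^ n) := by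
                apply mul_le_mul (m0_le_one _) ?_ (by positivity) (by norm_num)
                exact mul_le_mul hpref le_rfl h2n (by norm_num)
          _ = (1/2) ^ n := by ring
    _ = (3 : ENNReal) ^ (m + 1) * ENNReal.ofReal ((1/2) ^ n) := by
          rw [tsum_fintype, Finset.sum_const, Finset.card_univ, Fintype.card_fun,
            Fintype.card_fin, Fintype.card_fin, nsmul_eq_mul]
          push_cast
          ring
  have hlim : Tendsto (fun n => (3 : ENNReal) ^ (m + 1) * ENNReal.ofReal ((1/2) ^ n))
      atTop (𝓝 0) := by
    have h1 : Tendsto (fun n : ℕ => (1/2 : ℝ) ^ n) atTop (𝓝 0) :=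
      tendsto_pow_atTop_nhds_zero_of_lt_one (by norm_num) (by norm_num)
    have h2 : Tendsto (fun n : ℕ => ENNReal.ofReal ((1/2 : ℝ) ^ n)) atTop (𝓝 0) := by
      have := (ENNReal.continuous_ofReal.tendsto 0).comp h1
      rw [ENNReal.ofReal_zero] at this
      exact this
    have h3 := ENNReal.Tendsto.const_mul h2 (a := (3 : ENNReal) ^ (m + 1))
      (Or.inr (by norm_num))
    simpa using h3
  have : ℙ E ≤ 0 := ge_of_tendsto' hlim key
  exact le_antisymm this zero_le

include hstates hMarkov in
lemma good_ae : ∀ᵐ ω, (∀ i, trans (X i ω) (X (i + 1) ω) ≠ 0) ∧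
    (∀ m, ∃ i, m ≤ i ∧ X i ω ≠ mA) := by
  rw [MeasureTheory.ae_iff]
  apply measure_mono_null
    (t := (⋃ i, {ω | trans (X i ω) (X (i + 1) ω) = 0}) ∪
      ⋃ m, {ω | ∀ i, m ≤ i → X i ω = mA})
  · intro ω hω
    simp only [Set.mem_setOf_eq, not_and_or] at hω
    rcases hω with h | h
    · left
      push_neg at h
      obtain ⟨i, hi⟩ := h
      exact Set.mem_iUnion.2 ⟨i, by simpa using hi⟩
    · right
      push_neg at h
      obtain ⟨m, hm⟩ := h
      exact Set.mem_iUnion.2 ⟨m, fun i hi => hm i hi⟩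
  · exact measure_union_null (measure_iUnion_null (badR_null X hstates hMarkov))
      (measure_iUnion_null (tailA_null X hstates hMarkov))

end Prob

/-- **Failure of the law of large numbers for the spectral radius for Markovian
increments** (Aoun–Sert, Example 4.1): for the stationary Markov chain (X_n) on
{a, σ, ω} ⊆ SL₃(ℝ) with the transition probabilities above and with the stationary
initial distribution m, the products L_n = X_n ⋯ X_1 almost surely satisfy
liminf (1/n) log ρ(L_n) = 0 and limsup (1/n) log ρ(L_n) ≥ (1/3) log 3 > 0; in
particular (1/n) log ρ(L_n) does not converge almost surely. -/
theorem markovian_failure_of_LLN_spectral_radius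
    {Ω : Type*} [MeasureSpace Ω] [IsProbabilityMeasure (ℙ : Measure Ω)]
    (X : ℕ → Ω → Matrix (Fin 3) (Fin 3) ℝ)
    (hXmeas : ∀ n, Measurable (X n))
    (hstates : ∀ n ω, X n ω ∈ ({mA, mS, mW} : Set (Matrix (Fin 3) (Fin 3) ℝ)))
    -- the finite-dimensional distributions of the stationary Markov chain:
    (hMarkov : ∀ (n : ℕ) (w : ℕ → Matrix (Fin 3) (Fin 3) ℝ),
      ℙ {ω | ∀ i ≤ n, X i ω = w i} =
        ENNReal.ofReal (m0 (w 0) * ∏ i ∈ Finset.range n, trans (w i) (w (i + 1)))) :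
    (0:ℝ) < (1/3) * Real.log 3
    ∧ ∀ᵐ ω,
        Filter.liminf (fun n => Real.log (specRadR (Lprod X n ω)) / n) atTop = 0
        ∧ (1/3) * Real.log 3
            ≤ Filter.limsup (fun n => Real.log (specRadR (Lprod X n ω)) / n) atTop
        ∧ ¬ ∃ c : ℝ, Tendsto (fun n => Real.log (specRadR (Lprod X n ω)) / n)
              atTop (𝓝 c) := by
  have hpos : (0:ℝ) < (1/3) * Real.log 3 := by
    have := Real.log_pos (by norm_num : (1:ℝ) < 3)
    linarith
  refine ⟨hpos, ?_⟩
  filter_upwards [good_ae X hstates hMarkov] with ω hω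
  obtain ⟨hR, hNA⟩ := hω
  set f : ℕ → Matrix (Fin 3) (Fin 3) ℝ := fun i => X i ω with hf
  have hLf : ∀ n, Lprod X n ω = Lf f n := fun n => rfl
  have hst0 : f 0 = mA ∨ f 0 = mS ∨ f 0 = mW := states_or X hstates 0 ω
  have hstall := states_all hR hst0
  have hsig := sigma_inf hR hNA hstall
  set u : ℕ → ℝ := fun n => Real.log (specRadR (Lprod X n ω)) / n with hu
  have hu_eq : ∀ n, u n = Real.log (specRadR (Lf f n)) / n := by
    intro n; rw [hu]; simp only [hLf n]
  have hb1 : ∀ m, f m = mS → Lf f (m + 1) = mS * (mA ^ cnt f (m + 1) * Wf f) := by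
    intro m hm
    rcases Lf_form hR hst0 m with ⟨_, hne⟩ | ⟨hL, _⟩
    · exact absurd hm hne
    · exact hL
  have hb2 : ∀ m, f m ≠ mS → Lf f (m + 1) = mA ^ cnt f (m + 1) * Wf f := by
    intro m hm
    rcases Lf_form hR hst0 m with ⟨hL, _⟩ | ⟨_, he⟩
    · exact hL
    · exact absurd he hm
  obtain ⟨Hsmall, Hbig, Hall⟩ :
      (∀ N, ∃ n, N ≤ n ∧ specRadR (Lf f n) = 1) ∧
      (∀ N, ∃ n, N ≤ n ∧ 1 ≤ n ∧ specRadR (Lf f n) = 3 ^ (cnt f n)) ∧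
      (∀ n, specRadR (Lf f n) = 1 ∨ specRadR (Lf f n) = 3 ^ (cnt f n)) := by
    by_cases hw : f 0 = mW
    · have hWf := hWw f hw
      have hsmall : ∀ m, f m ≠ mS → specRadR (Lf f (m + 1)) = 1 := by
        intro m hm; rw [hb2 m hm, hWf]; exact specRadR_Dw _
      have hbig : ∀ m, f m = mS → specRadR (Lf f (m + 1)) = 3 ^ cnt f (m + 1) := by
        intro m hm; rw [hb1 m hm, hWf]; exact specRadR_sDw _
      refine ⟨?_, ?_, ?_⟩
      · intro N
        obtain ⟨i, hi, hiS⟩ := hsig N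
        have hnext : f (i + 1) = mW := next_of_mS hR hiS
        exact ⟨i + 2, by omega,
          hsmall (i + 1) (fun hh => mS_ne_mW ((hh.symm.trans hnext))) ⟩
      · intro N
        obtain ⟨i, hi, hiS⟩ := hsig N
        exact ⟨i + 1, by omega, by omega, hbig i hiS⟩
      · intro n
        cases n with
        | zero =>
          left; rw [Lf_zero]
          have := specRadR_mA_pow 0
          simpa using this
        | succ m =>
          by_cases hm : f m = mS
          · right; exact hbig m hm
          · left; exact hsmall m hm
    · have hWf := hW1 f hw
      have hsmall : ∀ m, f m = mS → specRadR (Lf f (m + 1)) = 1 := by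
        intro m hm; rw [hb1 m hm, hWf, mul_one]; exact specRadR_sD _
      have hbig : ∀ m, f m ≠ mS → specRadR (Lf f (m + 1)) = 3 ^ cnt f (m + 1) := by
        intro m hm; rw [hb2 m hm, hWf, mul_one]; exact specRadR_mA_pow _
      refine ⟨?_, ?_, ?_⟩
      · intro N
        obtain ⟨i, hi, hiS⟩ := hsig N
        exact ⟨i + 1, by omega, hsmall i hiS⟩
      · intro N
        obtain ⟨i, hi, hiS⟩ := hsig N
        have hnext : f (i + 1) = mW := next_of_mS hR hiS
        exact ⟨i + 2, by omega, by omega,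
          hbig (i + 1) (fun hh => mS_ne_mW ((hh.symm.trans hnext)))⟩
      · intro n
        cases n with
        | zero =>
          left; rw [Lf_zero]
          have := specRadR_mA_pow 0
          simpa using this
        | succ m =>
          by_cases hm : f m = mS
          · left; exact hsmall m hm
          · right; exact hbig m hm
  have hlog3 : (0:ℝ) ≤ Real.log 3 := Real.log_nonneg (by norm_num)
  have hu0 : ∀ n, 0 ≤ u n := by
    intro n
    rcases Hall n with h | h
    · rw [hu_eq, h, Real.log_one, zero_div]
    · rw [hu_eq, h, Real.log_pow]
      exact div_nonneg (mul_nonneg (Nat.cast_nonneg _) hlog3) (Nat.cast_nonneg _)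
  have huB : ∀ n, u n ≤ Real.log 3 := by
    intro n
    rcases Hall n with h | h
    · rw [hu_eq, h, Real.log_one, zero_div]; exact hlog3
    · rw [hu_eq, h, Real.log_pow]
      rcases Nat.eq_zero_or_pos n with rfl | hn
      · simpa using hlog3
      · rw [div_le_iff₀ (by exact_mod_cast hn)]
        have hc : (cnt f n : ℝ) ≤ n := by exact_mod_cast cnt_le f n
        nlinarith
  have hbddle : IsBoundedUnder (· ≤ ·) atTop u := isBoundedUnder_of ⟨Real.log 3, huB⟩
  have hbddge : IsBoundedUnder (· ≥ ·) atTop u := isBoundedUnder_of ⟨0, hu0⟩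
  have hfreq0 : ∃ᶠ n in atTop, u n ≤ 0 := by
    rw [frequently_atTop]
    intro N
    obtain ⟨n, hn, hval⟩ := Hsmall N
    exact ⟨n, hn, by rw [hu_eq, hval, Real.log_one, zero_div]⟩
  have hliminf : liminf u atTop = 0 :=
    le_antisymm (liminf_le_of_frequently_le hfreq0 hbddge)
      (le_liminf_of_le (hbddle.isCoboundedUnder_ge) (Eventually.of_forall hu0))
  have hlimsup : (1/3) * Real.log 3 ≤ limsup u atTop := by
    apply le_of_forall_sub_le
    intro ε hε
    have hfb : ∃ᶠ n in atTop, (1/3) * Real.log 3 - ε ≤ u n := by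
      rw [frequently_atTop]
      intro N
      obtain ⟨n₀, hn₀⟩ := exists_nat_ge (Real.log 3 / ε)
      obtain ⟨n, hn, hn1, hval⟩ := Hbig (max N (max n₀ 1))
      refine ⟨n, le_trans (le_max_left _ _) hn, ?_⟩
      have hnn0 : (0:ℝ) < n := by
        have : 1 ≤ n := hn1
        exact_mod_cast this
      have hcnt : ((n:ℝ) - 3) / 3 ≤ (cnt f n : ℝ) := by
        have h3 := cnt_lower hR hst0 n
        have h3' : (n:ℝ) ≤ 3 * (cnt f n : ℝ) + 3 := by exact_mod_cast h3
        linarith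
      have hueq : u n = (cnt f n : ℝ) * Real.log 3 / n := by
        rw [hu_eq, hval, Real.log_pow]
      have hn0n : (n₀ : ℝ) ≤ n := by
        have : n₀ ≤ n := le_trans (le_trans (le_max_left _ _) (le_max_right _ _)) hn
        exact_mod_cast this
      have h1 : Real.log 3 / n ≤ ε := by
        rw [div_le_iff₀ hnn0]
        have := (div_le_iff₀ hε).mp (le_trans hn₀ hn0n)
        linarith
      have h2 : (1/3) * Real.log 3 - Real.log 3 / n ≤ u n := by
        rw [hueq, le_div_iff₀ hnn0]
        have hmul := mul_le_mul_of_nonneg_right hcnt hlog3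
        have hexp : ((1/3) * Real.log 3 - Real.log 3 / n) * n =
            ((n:ℝ) - 3) / 3 * Real.log 3 := by
          field_simp
        rw [hexp]
        exact hmul
      linarith
    have := le_limsup_of_frequently_le hfb hbddle
    linarith
  refine ⟨hliminf, hlimsup, ?_⟩
  rintro ⟨c, hc⟩
  have h1 : liminf u atTop = c := hc.liminf_eq
  have h2 : limsup u atTop = c := hc.limsup_eq
  rw [hliminf] at h1
  rw [h2] at hlimsup
  rw [← h1] at hlimsup
  linarith


end RMP
end
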